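/- Let A be a real I × J matrix, b ∈ ℝ^I, and q ∈ ℝ^J, and suppose the feasible set F = { x ∈ [0,1]^J : Ax = b } is nonempty. Let P_Ω be the nearest-point projection of ℝ^J onto Ω = [0,1]^J, and define f(λ) = ½‖q − Aᵀλ − P_Ω(q − Aᵀλ)‖² − ½‖q − Aᵀλ‖² − ⟨λ, b⟩ + ½‖q‖². If λ* ∈ ℝ^I is a maximizer of f over ℝ^I, then x* = P_Ω(q − Aᵀλ*) belongs to F and is the unique minimizer of ½‖x − q‖² over F; that is, x* is the nearest point to q in the feasible set F. -/

import Mathlib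

set_option maxHeartbeats 1000000

open scoped RealInnerProductSpace

private lemma var_ineq' {J : ℕ} (P : EuclideanSpace ℝ (Fin J) → EuclideanSpace ℝ (Fin J))
    (hP : ∀ x : EuclideanSpace ℝ (Fin J),
      (∀ j, 0 ≤ P x j ∧ P x j ≤ 1) ∧
      ∀ z : EuclideanSpace ℝ (Fin J), (∀ j, 0 ≤ z j ∧ z j ≤ 1) → ‖x - P x‖ ≤ ‖x - z‖)
    (x w : EuclideanSpace ℝ (Fin J)) (hw : ∀ j, 0 ≤ w j ∧ w j ≤ 1) :
    ⟪x - P x, w - P x⟫ ≤ 0 := by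
  have key : ∀ t : ℝ, 0 < t → t ≤ 1 → ⟪x - P x, w - P x⟫ ≤ t / 2 * ‖w - P x‖ ^ 2 := by
    intro t ht ht1
    set z : EuclideanSpace ℝ (Fin J) := P x + t • (w - P x) with hz
    have hzbox : ∀ j, 0 ≤ z j ∧ z j ≤ 1 := by
      intro j
      have hzj : z j = (1 - t) * P x j + t * w j := by
        simp [hz, PiLp.add_apply, PiLp.smul_apply, PiLp.sub_apply, smul_eq_mul]; ring
      have h1 := (hP x).1 j
      have h2 := hw j
      constructor <;> rw [hzj] <;> nlinarith [h1.1, h1.2, h2.1, h2.2]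
    have hle := (hP x).2 z hzbox
    have hsq : ‖x - P x‖ ^ 2 ≤ ‖x - z‖ ^ 2 :=
      pow_le_pow_left₀ (norm_nonneg _) hle 2
    have hxz : x - z = (x - P x) - t • (w - P x) := by rw [hz]; abel
    have hexp := norm_sub_sq_real (x - P x) (t • (w - P x))
    rw [hxz, hexp, real_inner_smul_right, norm_smul] at hsq
    simp only [Real.norm_eq_abs, abs_of_pos ht, mul_pow] at hsq
    nlinarith [norm_nonneg (w - P x)]
  have hε : ∀ ε : ℝ, 0 < ε → ⟪x - P x, w - P x⟫ ≤ 0 + ε := by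
    intro ε hε
    set K := ‖w - P x‖ ^ 2 with hK
    have hK0 : 0 ≤ K := by positivity
    set t : ℝ := min 1 (2 * ε / (K + 1)) with htdef
    have ht : 0 < t := by
      apply lt_min one_pos
      positivity
    have ht1 : t ≤ 1 := min_le_left _ _
    have h2 : t ≤ 2 * ε / (K + 1) := min_le_right _ _
    have := key t ht ht1
    have hdiv : 2 * ε / (K + 1) * K ≤ 2 * ε := by
      rw [div_mul_eq_mul_div, div_le_iff₀ (by linarith)]
      nlinarith
    nlinarith
  linarith [le_of_forall_pos_le_add hε]

private lemma nonexp' {J : ℕ} (P : EuclideanSpace ℝ (Fin J) → EuclideanSpace ℝ (Fin J))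
    (hP : ∀ x : EuclideanSpace ℝ (Fin J),
      (∀ j, 0 ≤ P x j ∧ P x j ≤ 1) ∧
      ∀ z : EuclideanSpace ℝ (Fin J), (∀ j, 0 ≤ z j ∧ z j ≤ 1) → ‖x - P x‖ ≤ ‖x - z‖)
    (x y : EuclideanSpace ℝ (Fin J)) : ‖P x - P y‖ ≤ ‖x - y‖ := by
  have h1 := var_ineq' P hP x (P y) ((hP y).1)
  have h2 := var_ineq' P hP y (P x) ((hP x).1)
  have hcs : ⟪x - y, P x - P y⟫ ≤ ‖x - y‖ * ‖P x - P y‖ := real_inner_le_norm _ _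
  have hkey : ‖P x - P y‖ ^ 2 ≤ ⟪x - y, P x - P y⟫ := by
    rw [← real_inner_self_eq_norm_sq]
    simp only [inner_sub_left, inner_sub_right] at h1 h2 ⊢
    linarith [real_inner_comm (P y) (P x), real_inner_comm x (P y), real_inner_comm x (P x),
      real_inner_comm y (P x), real_inner_comm y (P y)]
  nlinarith [norm_nonneg (P x - P y), norm_nonneg (x - y)]

theorem dual_maximizer_recovers_projection
    (I J : ℕ)
    (A : Matrix (Fin I) (Fin J) ℝ)
    (b : EuclideanSpace ℝ (Fin I))
    (q : EuclideanSpace ℝ (Fin J))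
    (hfeas : ∃ x : EuclideanSpace ℝ (Fin J),
      (∀ j, 0 ≤ x j ∧ x j ≤ 1) ∧ (∀ i, (∑ j, A i j * x j) = b i))
    (P : EuclideanSpace ℝ (Fin J) → EuclideanSpace ℝ (Fin J))
    (hP : ∀ x : EuclideanSpace ℝ (Fin J),
      (∀ j, 0 ≤ P x j ∧ P x j ≤ 1) ∧
      ∀ z : EuclideanSpace ℝ (Fin J), (∀ j, 0 ≤ z j ∧ z j ≤ 1) → ‖x - P x‖ ≤ ‖x - z‖)
    (At : EuclideanSpace ℝ (Fin I) → EuclideanSpace ℝ (Fin J))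
    (hAt : ∀ (lam : EuclideanSpace ℝ (Fin I)) (j : Fin J), At lam j = ∑ i, A i j * lam i)
    (f : EuclideanSpace ℝ (Fin I) → ℝ)
    (hf : ∀ lam, f lam = 1 / 2 * ‖q - At lam - P (q - At lam)‖ ^ 2
        - 1 / 2 * ‖q - At lam‖ ^ 2 - ⟪lam, b⟫ + 1 / 2 * ‖q‖ ^ 2)
    (lamStar : EuclideanSpace ℝ (Fin I))
    (hmax : ∀ lam : EuclideanSpace ℝ (Fin I), f lam ≤ f lamStar) :
    (∀ j, 0 ≤ P (q - At lamStar) j ∧ P (q - At lamStar) j ≤ 1) ∧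
    (∀ i, (∑ j, A i j * P (q - At lamStar) j) = b i) ∧
    (∀ x : EuclideanSpace ℝ (Fin J), (∀ j, 0 ≤ x j ∧ x j ≤ 1) →
      (∀ i, (∑ j, A i j * x j) = b i) →
      1 / 2 * ‖P (q - At lamStar) - q‖ ^ 2 ≤ 1 / 2 * ‖x - q‖ ^ 2) ∧
    (∀ x : EuclideanSpace ℝ (Fin J), (∀ j, 0 ≤ x j ∧ x j ≤ 1) →
      (∀ i, (∑ j, A i j * x j) = b i) →
      1 / 2 * ‖x - q‖ ^ 2 = 1 / 2 * ‖P (q - At lamStar) - q‖ ^ 2 →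
      x = P (q - At lamStar)) := by
  have hinnerI : ∀ u v : EuclideanSpace ℝ (Fin I), ⟪u, v⟫ = ∑ i, u i * v i := by
    intro u v; simp [PiLp.inner_apply, RCLike.inner_apply]; exact Finset.sum_congr rfl fun _ _ => mul_comm _ _
  have hinnerJ : ∀ u v : EuclideanSpace ℝ (Fin J), ⟪u, v⟫ = ∑ j, u j * v j := by
    intro u v; simp [PiLp.inner_apply, RCLike.inner_apply]; exact Finset.sum_congr rfl fun _ _ => mul_comm _ _
  -- adjoint identity
  have hadj : ∀ (μ : EuclideanSpace ℝ (Fin I)) (z : EuclideanSpace ℝ (Fin J)),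
      ⟪At μ, z⟫ = ∑ i, μ i * (∑ j, A i j * z j) := by
    intro μ z
    rw [hinnerJ]
    calc ∑ j, At μ j * z j = ∑ j, ∑ i, A i j * μ i * z j := by
          refine Finset.sum_congr rfl fun j _ => ?_
          rw [hAt, Finset.sum_mul]
      _ = ∑ i, ∑ j, A i j * μ i * z j := Finset.sum_comm
      _ = ∑ i, μ i * (∑ j, A i j * z j) := by
          refine Finset.sum_congr rfl fun i _ => ?_
          rw [Finset.mul_sum]
          exact Finset.sum_congr rfl fun j _ => by ring
  -- linearity of At
  have hAtlin : ∀ (l m : EuclideanSpace ℝ (Fin I)) (t : ℝ),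
      At (l + t • m) = At l + t • At m := by
    intro l m t
    ext j
    have h1 : (At l + t • At m) j = At l j + t * At m j := by
      simp [PiLp.add_apply, PiLp.smul_apply, smul_eq_mul]
    rw [h1, hAt, hAt, hAt, Finset.mul_sum, ← Finset.sum_add_distrib]
    refine Finset.sum_congr rfl fun i _ => ?_
    have h2 : (l + t • m) i = l i + t * m i := by
      simp [PiLp.add_apply, PiLp.smul_apply, smul_eq_mul]
    rw [h2]; ring
  -- key Lagrangian identity
  have hkey : ∀ (lam : EuclideanSpace ℝ (Fin I)) (z : EuclideanSpace ℝ (Fin J)),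
      (1 / 2 * ‖z - q‖ ^ 2 + ⟪At lam, z⟫ - ⟪lam, b⟫) - f lam
        = 1 / 2 * ‖z - (q - At lam)‖ ^ 2
          - 1 / 2 * ‖q - At lam - P (q - At lam)‖ ^ 2 := by
    intro lam z
    rw [hf]
    have h1 : z - (q - At lam) = (z - q) + At lam := by abel
    rw [h1, norm_add_sq_real (z - q) (At lam), norm_sub_sq_real q (At lam),
      inner_sub_left, real_inner_comm (At lam) z]
    ring
  -- f lam equals Lagrangian value at its projection
  have hfg : ∀ lam : EuclideanSpace ℝ (Fin I),
      f lam = 1 / 2 * ‖P (q - At lam) - q‖ ^ 2 + ⟪At lam, P (q - At lam)⟫ - ⟪lam, b⟫ := by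
    intro lam
    have h := hkey lam (P (q - At lam))
    have h2 : ‖P (q - At lam) - (q - At lam)‖ = ‖q - At lam - P (q - At lam)‖ :=
      norm_sub_rev _ _
    rw [h2] at h
    linarith
  -- weak duality bound
  have hlb : ∀ (lam : EuclideanSpace ℝ (Fin I)) (z : EuclideanSpace ℝ (Fin J)),
      (∀ j, 0 ≤ z j ∧ z j ≤ 1) →
      f lam ≤ 1 / 2 * ‖z - q‖ ^ 2 + ⟪At lam, z⟫ - ⟪lam, b⟫ := by
    intro lam z hz
    have h := (hP (q - At lam)).2 z hz
    have hsq : ‖q - At lam - P (q - At lam)‖ ^ 2 ≤ ‖q - At lam - z‖ ^ 2 :=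
      pow_le_pow_left₀ (norm_nonneg _) h 2
    have hrev : ‖z - (q - At lam)‖ = ‖q - At lam - z‖ := norm_sub_rev _ _
    have hk := hkey lam z
    rw [hrev] at hk
    linarith
  -- feasibility of x* := P (q - At lamStar)
  set xs : EuclideanSpace ℝ (Fin J) := P (q - At lamStar) with hxs
  let r : EuclideanSpace ℝ (Fin I) := WithLp.toLp 2 (fun i => (∑ j, A i j * xs j) - b i)
  have hri : ∀ i, r i = (∑ j, A i j * xs j) - b i := fun i => rfl
  have hdir : ∀ μ : EuclideanSpace ℝ (Fin I), ⟪μ, r⟫ ≤ 0 := by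
    intro μ
    have hεbound : ∀ ε : ℝ, 0 < ε → ⟪μ, r⟫ ≤ 0 + ε := by
      intro ε hε
      set K := ‖At μ‖ ^ 2 with hK
      have hK0 : 0 ≤ K := by positivity
      set t : ℝ := ε / (K + 1) with htdef
      have ht : 0 < t := by positivity
      set lam : EuclideanSpace ℝ (Fin I) := lamStar + t • μ with hlam
      set zt : EuclideanSpace ℝ (Fin J) := P (q - At lam) with hzt
      have hboxzt := (hP (q - At lam)).1
      have e1 : f lam ≤ f lamStar := hmax lam
      have e2 : f lamStar ≤ 1 / 2 * ‖zt - q‖ ^ 2 + ⟪At lamStar, zt⟫ - ⟪lamStar, b⟫ :=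
        hlb lamStar zt hboxzt
      have e3 : f lam = 1 / 2 * ‖zt - q‖ ^ 2 + ⟪At lam, zt⟫ - ⟪lam, b⟫ := hfg lam
      have e4 : ⟪At lam, zt⟫ = ⟪At lamStar, zt⟫ + t * ⟪At μ, zt⟫ := by
        rw [hlam, hAtlin, inner_add_left, real_inner_smul_left]
      have e5 : ⟪lam, b⟫ = ⟪lamStar, b⟫ + t * ⟪μ, b⟫ := by
        rw [hlam, inner_add_left, real_inner_smul_left]
      have step1 : ⟪At μ, zt⟫ - ⟪μ, b⟫ ≤ 0 := by nlinarith
      have e6 : ⟪μ, r⟫ = ⟪At μ, xs⟫ - ⟪μ, b⟫ := by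
        rw [hinnerI μ r, hinnerI μ b, hadj μ xs, ← Finset.sum_sub_distrib]
        refine Finset.sum_congr rfl fun i _ => ?_
        rw [hri]; ring
      have e7 : ‖xs - zt‖ ≤ ‖(q - At lamStar) - (q - At lam)‖ :=
        nonexp' P hP _ _
      have e8 : (q - At lamStar) - (q - At lam) = t • At μ := by
        rw [hlam, hAtlin]; abel
      have e9 : ‖(t : ℝ) • At μ‖ = t * ‖At μ‖ := by
        rw [norm_smul, Real.norm_eq_abs, abs_of_pos ht]
      rw [e8, e9] at e7
      have e10 : ⟪At μ, xs - zt⟫ ≤ ‖At μ‖ * ‖xs - zt‖ := real_inner_le_norm _ _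
      have e11 : ⟪At μ, xs⟫ = ⟪At μ, zt⟫ + ⟪At μ, xs - zt⟫ := by
        rw [inner_sub_right]; ring
      have e12 : ‖At μ‖ * ‖xs - zt‖ ≤ ‖At μ‖ * (t * ‖At μ‖) :=
        mul_le_mul_of_nonneg_left e7 (norm_nonneg _)
      have e13 : t * K ≤ ε := by
        rw [htdef, div_mul_eq_mul_div, div_le_iff₀ (by linarith)]
        nlinarith
      have : ⟪μ, r⟫ ≤ t * K := by
        rw [e6, e11, hK]; nlinarith
      linarith
    linarith [le_of_forall_pos_le_add hεbound]
  have hr0 : r = 0 := by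
    have h := hdir r
    exact real_inner_self_nonpos.mp h
  have hfeas2 : ∀ i, (∑ j, A i j * xs j) = b i := by
    intro i
    have h : r i = 0 := by rw [hr0]; rfl
    rw [hri] at h
    linarith
  -- inner product with At lamStar is constant on feasible set
  have hconst : ∀ x : EuclideanSpace ℝ (Fin J), (∀ i, (∑ j, A i j * x j) = b i) →
      ⟪At lamStar, x⟫ = ⟪lamStar, b⟫ := by
    intro x hx
    rw [hadj, hinnerI]
    exact Finset.sum_congr rfl fun i _ => by rw [hx i]
  have hfstar : f lamStar = 1 / 2 * ‖xs - q‖ ^ 2 := by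
    rw [hfg lamStar, hconst xs hfeas2]; ring
  refine ⟨(hP (q - At lamStar)).1, hfeas2, ?_, ?_⟩
  · intro x hxb hxf
    have h1 := hlb lamStar x hxb
    rw [hconst x hxf] at h1
    linarith
  · intro x hxb hxf heq
    -- equality case
    have h1 := hkey lamStar x
    rw [hconst x hxf] at h1
    have heq2 : ‖x - (q - At lamStar)‖ ^ 2 = ‖q - At lamStar - xs‖ ^ 2 := by
      rw [hfstar] at h1
      linarith [h1, heq]
    set m : EuclideanSpace ℝ (Fin J) := (1/2 : ℝ) • (x + xs) with hm
    have hmbox : ∀ j, 0 ≤ m j ∧ m j ≤ 1 := by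
      intro j
      have hmj : m j = 1/2 * (x j + xs j) := by
        simp [hm, PiLp.add_apply, PiLp.smul_apply, smul_eq_mul]; ring
      have h2 := hxb j
      have h3 := (hP (q - At lamStar)).1 j
      constructor <;> rw [hmj] <;> [nlinarith [h2.1, h3.1]; nlinarith [h2.2, h3.2]]
    have hle := (hP (q - At lamStar)).2 m hmbox
    have hsq : ‖q - At lamStar - xs‖ ^ 2 ≤ ‖q - At lamStar - m‖ ^ 2 :=
      pow_le_pow_left₀ (norm_nonneg _) hle 2
    have hym : q - At lamStar - m
        = (1/2 : ℝ) • ((q - At lamStar - x) + (q - At lamStar - xs)) := by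
      rw [hm]; module
    have hnm : ‖q - At lamStar - m‖ ^ 2
        = 1/4 * (‖q - At lamStar - x‖ ^ 2
          + 2 * ⟪q - At lamStar - x, q - At lamStar - xs⟫
          + ‖q - At lamStar - xs‖ ^ 2) := by
      rw [hym, norm_smul, Real.norm_eq_abs, mul_pow,
        norm_add_sq_real (q - At lamStar - x) (q - At lamStar - xs)]
      norm_num
    have hd : x - xs = (q - At lamStar - xs) - (q - At lamStar - x) := by abel
    have hnx : ‖x - xs‖ ^ 2 = ‖q - At lamStar - xs‖ ^ 2
        - 2 * ⟪q - At lamStar - x, q - At lamStar - xs⟫ + ‖q - At lamStar - x‖ ^ 2 := by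
      rw [hd, norm_sub_sq_real, real_inner_comm]
    have hrev : ‖x - (q - At lamStar)‖ = ‖q - At lamStar - x‖ := norm_sub_rev _ _
    rw [hrev] at heq2
    have hzero : ‖x - xs‖ ^ 2 ≤ 0 := by nlinarith
    have : ‖x - xs‖ = 0 := by nlinarith [norm_nonneg (x - xs)]
    have := norm_eq_zero.mp this
    exact sub_eq_zero.mp this
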